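/- Define f : ℕ → ℕ on inputs x ≥ 2 by f(x) = 2^(Nat.clog 2 x) · x (so f(x) = 2^k · x for the unique k ≥ 1 with 2^(k−1) < x ≤ 2^k). Then for every x ≥ 2: if f(x+2) − f(x+1) = f(x+1) − f(x), then f(x+1) − f(x) is a power of 2, i.e. there exists j with f(x+1) − f(x) = 2^j. -/

import Mathlib

theorem difference_equal_implies_power_of_two (x : ℕ) (hx : 2 ≤ x)
    (f : ℕ → ℕ) (hf : ∀ n, f n = 2 ^ Nat.clog 2 n * n)
    (h : f (x + 2) - f (x + 1) = f (x + 1) - f x) :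
    ∃ j : ℕ, f (x + 1) - f x = 2 ^ j := by
  set k := Nat.clog 2 x with hk
  have hxk : x ≤ 2 ^ k := Nat.le_pow_clog one_lt_two x
  by_cases hcase : x + 1 ≤ 2 ^ k
  · -- clog 2 (x+1) = k
    have h1 : Nat.clog 2 (x + 1) ≤ k := (Nat.clog_le_iff_le_pow one_lt_two).mpr hcase
    have h2 : k ≤ Nat.clog 2 (x + 1) := Nat.clog_mono_right 2 (Nat.le_succ x)
    have heq : Nat.clog 2 (x + 1) = k := le_antisymm h1 h2
    refine ⟨k, ?_⟩
    rw [hf, hf, heq, ← hk]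
    have : 2 ^ k * (x + 1) = 2 ^ k * x + 2 ^ k := by ring
    omega
  · -- x = 2^k, derive contradiction from h
    exfalso
    have hxeq : x = 2 ^ k := by omega
    have hk1 : 1 ≤ k := by
      rcases Nat.eq_zero_or_pos k with h0 | h0
      · rw [h0] at hxeq; omega
      · exact h0
    have hp2 : 2 ≤ 2 ^ k := by
      calc 2 = 2 ^ 1 := rfl
      _ ≤ 2 ^ k := Nat.pow_le_pow_right (by norm_num) hk1
    have hc1 : Nat.clog 2 (x + 1) = k + 1 := by
      have hle : Nat.clog 2 (x + 1) ≤ k + 1 := by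
        apply (Nat.clog_le_iff_le_pow one_lt_two).mpr
        rw [hxeq, pow_succ]; omega
      have hgt : k < Nat.clog 2 (x + 1) := by
        apply (Nat.lt_clog_iff_pow_lt one_lt_two).mpr
        omega
      omega
    have hc2 : Nat.clog 2 (x + 2) = k + 1 := by
      have hle : Nat.clog 2 (x + 2) ≤ k + 1 := by
        apply (Nat.clog_le_iff_le_pow one_lt_two).mpr
        rw [hxeq, pow_succ]; omega
      have hgt := Nat.clog_mono_right 2 (show x + 1 ≤ x + 2 by omega)
      omega
    rw [hf, hf, hf, hc1, hc2, ← hk] at h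
    have e1 : 2 ^ (k + 1) * (x + 2) = 2 ^ (k + 1) * (x + 1) + 2 ^ (k + 1) := by ring
    have e2 : 2 ^ (k + 1) * (x + 1) = 2 ^ k * x + (2 ^ k * x + 2 ^ (k + 1)) := by
      rw [hxeq, pow_succ]; ring
    have e3 : (0:ℕ) < 2 ^ k * x := by positivity
    omega
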